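/- For every fixed t > 0, the function g(x) = 1 + x·(e^{t/x} - 1) is strictly decreasing in x on (0, ∞). -/

import Mathlib

/-- For fixed `t > 0`, the function `x ↦ 1 + x(e^{t/x} - 1)` is strictly decreasing on
`(0, ∞)`. -/
theorem chernoff_aux_strict_anti (t : ℝ) (ht : 0 < t) :
    StrictAntiOn (fun x : ℝ => 1 + x * (Real.exp (t / x) - 1)) (Set.Ioi 0) := by
  have hderiv : ∀ x ∈ Set.Ioi (0:ℝ),
      HasDerivAt (fun x : ℝ => 1 + x * (Real.exp (t / x) - 1))
        (Real.exp (t / x) * (1 - t / x) - 1) x := by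
    intro x hx
    have hx0 : x ≠ 0 := ne_of_gt hx
    have h1 : HasDerivAt (fun x : ℝ => t / x) (-(t / x ^ 2)) x := by
      simpa [div_eq_mul_inv, mul_comm] using
        (hasDerivAt_inv hx0).const_mul t
    have h2 : HasDerivAt (fun x : ℝ => Real.exp (t / x))
        (Real.exp (t / x) * (-(t / x ^ 2))) x := (Real.hasDerivAt_exp _).comp x h1
    have h3 : HasDerivAt (fun x : ℝ => x * (Real.exp (t / x) - 1))
        (1 * (Real.exp (t / x) - 1) + x * (Real.exp (t / x) * (-(t / x ^ 2)))) x :=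
      (hasDerivAt_id x).mul (h2.sub_const 1)
    have h4 := h3.const_add 1
    convert h4 using 1
    · rfl
    · rfl
    rw [show x * (Real.exp (t / x) * (-(t / x ^ 2))) = Real.exp (t / x) * (-(t / x)) by field_simp]
    ring
  apply StrictAntiOn.mono _ (le_refl (Set.Ioi (0:ℝ)))
  apply strictAntiOn_of_hasDerivWithinAt_neg (convex_Ioi (0:ℝ))
    (fun x hx => ((hderiv x hx).continuousAt.continuousWithinAt))
  · intro x hx
    rw [interior_Ioi] at hx
    exact ((hderiv x hx).hasDerivWithinAt)
  · intro x hx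
    rw [interior_Ioi] at hx
    have hu : 0 < t / x := div_pos ht hx
    have h := Real.add_one_lt_exp (x := -(t/x)) (by linarith)
    have key := mul_lt_mul_of_pos_left h (Real.exp_pos (t/x))
    rw [← Real.exp_add] at key
    simp at key
    nlinarith [key]
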